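/- Let G be a group acting on a set S, let V be a rational vector space, and let f : S → V satisfy f((yx)·r) + f((y x⁻¹)·r) = 2 f(y·r) for all x, y ∈ G and r ∈ S. Extend f to a ℚ-bilinear map F : ℚ[G] × S → V by F(Σ c_g g, r) = Σ c_g f(g·r). Then for all x, y, z ∈ G and r ∈ S: (i) F((x−1)(y−1), r) = −F((y−1)(x−1), r), and (ii) F((x−1)(y−1)(z−1), r) = 0. -/

import Mathlib

open MonoidAlgebra

theorem stmt_16 {G : Type*} [Group G] {S : Type*} [MulAction G S]
    {V : Type*} [AddCommGroup V] [Module ℚ V]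
    (f : S → V)
    (hf : ∀ (x y : G) (r : S), f ((y * x) • r) + f ((y * x⁻¹) • r) = (2 : ℚ) • f (y • r))
    (F : MonoidAlgebra ℚ G →ₗ[ℚ] S → V)
    (hF : ∀ (g : G) (r : S), F (of ℚ G g) r = f (g • r)) :
    ∀ (x y z : G) (r : S),
      F ((of ℚ G x - 1) * (of ℚ G y - 1)) r = - F ((of ℚ G y - 1) * (of ℚ G x - 1)) r
      ∧ F ((of ℚ G x - 1) * (of ℚ G y - 1) * (of ℚ G z - 1)) r = 0 := by
  intro x y z r
  set e : G → V := fun g => f (g • r) with he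
  -- Basic identity: e (a*b) + e (a*b⁻¹) = 2 • e a
  have h1 : ∀ a b : G, e (a * b) + e (a * b⁻¹) = (2 : ℚ) • e a := fun a b => hf b a r
  -- Symmetric identity: e(ab) + e(ba) = 2 e a + 2 e b - 2 e 1
  have P : ∀ a b : G,
      e (a * b) + e (b * a) = (2 : ℚ) • e a + (2 : ℚ) • e b - (2 : ℚ) • e 1 := by
    intro a b
    have hab := h1 a b
    have hba := h1 b a
    have h3 := h1 1 (a * b⁻¹)
    rw [one_mul, one_mul, mul_inv_rev, inv_inv] at h3
    linear_combination (norm := module) hab + hba - h3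
  -- values of F on the relevant elements
  have hF1 : F 1 r = e 1 := by
    have := hF 1 r
    rwa [map_one] at this
  have expand2 : ∀ a b : G,
      F ((of ℚ G a - 1) * (of ℚ G b - 1)) r = e (a * b) - e a - e b + e 1 := by
    intro a b
    have hmul : (of ℚ G a - 1) * (of ℚ G b - 1)
        = of ℚ G (a * b) - of ℚ G a - of ℚ G b + 1 := by
      rw [map_mul]; noncomm_ring
    rw [hmul, map_add, map_sub, map_sub]
    simp only [Pi.add_apply, Pi.sub_apply, hF  (a*b) r, hF a r, hF b r, hF1]
    rfl
  have expand3 : ∀ a b c : G,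
      F ((of ℚ G a - 1) * (of ℚ G b - 1) * (of ℚ G c - 1)) r
        = e (a * b * c) - e (a * b) - e (a * c) - e (b * c)
          + e a + e b + e c - e 1 := by
    intro a b c
    have hmul : (of ℚ G a - 1) * (of ℚ G b - 1) * (of ℚ G c - 1)
        = of ℚ G (a * b * c) - of ℚ G (a * b) - of ℚ G (a * c) - of ℚ G (b * c)
          + of ℚ G a + of ℚ G b + of ℚ G c - 1 := by
      simp only [map_mul]; noncomm_ring
    rw [hmul]
    simp only [map_sub, map_add, Pi.add_apply, Pi.sub_apply, hF, hF1]
    rfl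
  -- the trilinear value
  set U : G → G → G → V := fun a b c =>
    e (a * b * c) - e (a * b) - e (a * c) - e (b * c) + e a + e b + e c - e 1 with hU
  -- cyclic antisymmetry of U
  have cyc : ∀ a b c : G, U a b c = - U c a b := by
    intro a b c
    have hP1 := P (a * b) c
    have hP2 := P a c
    have hP3 := P b c
    have hassoc : c * (a * b) = c * a * b := by rw [mul_assoc]
    rw [hassoc] at hP1
    simp only [hU]
    linear_combination (norm := module) hP1 - hP2 - hP3
  constructor
  · rw [expand2 x y, expand2 y x]
    have hP := P x y
    linear_combination (norm := module) hP
  · rw [expand3 x y z]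
    have h2 : U x y z = - U x y z := by
      calc U x y z = - U z x y := cyc x y z
        _ = - - U y z x := by rw [cyc z x y]
        _ = - U x y z := by rw [cyc y z x, neg_neg]
    have h2' : (2 : ℚ) • U x y z = 0 := by
      rw [two_smul]
      linear_combination (norm := module) h2
    have : U x y z = 0 := by
      have := congrArg (fun v => ((2 : ℚ)⁻¹) • v) h2'
      simpa [smul_smul] using this
    simpa [hU] using this
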